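/- Let f : [a,b] → ℝ be a twice differentiable function such that there exists a real constant M with 0 ≤ f''(x) ≤ M for all x ∈ [a,b], and let λ ∈ [0,1]. Then 0 ≤ (1-λ)f(a) + λf(b) - f((1-λ)a + λb) ≤ λ(1-λ)M(b-a)². -/

import Mathlib

/-- **Theorem 2.1.** Let `f : [a,b] → ℝ` be a twice differentiable function such that there
exists a real constant `M` with `0 ≤ f'' x ≤ M` for all `x ∈ [a,b]`, and let `λ ∈ [0,1]`.
Then `0 ≤ (1-λ) f a + λ f b - f ((1-λ) a + λ b) ≤ λ (1-λ) M (b-a)^2`. -/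
theorem stmt_0 (a b M lam : ℝ) (hab : a < b) (hlam : lam ∈ Set.Icc (0 : ℝ) 1)
    (f f' f'' : ℝ → ℝ)
    (hf' : ∀ x ∈ Set.Icc a b, HasDerivWithinAt f (f' x) (Set.Icc a b) x)
    (hf'' : ∀ x ∈ Set.Icc a b, HasDerivWithinAt f' (f'' x) (Set.Icc a b) x)
    (hM : ∀ x ∈ Set.Icc a b, 0 ≤ f'' x ∧ f'' x ≤ M) :
    0 ≤ (1 - lam) * f a + lam * f b - f ((1 - lam) * a + lam * b) ∧
      (1 - lam) * f a + lam * f b - f ((1 - lam) * a + lam * b) ≤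
        lam * (1 - lam) * M * (b - a) ^ 2 := by
  obtain ⟨hl0, hl1⟩ := hlam
  have ha : a ∈ Set.Icc a b := ⟨le_refl a, hab.le⟩
  have hb : b ∈ Set.Icc a b := ⟨hab.le, le_refl b⟩
  have hM0 : 0 ≤ M := le_trans (hM a ha).1 (hM a ha).2
  have hint : interior (Set.Icc a b) ⊆ Set.Icc a b := interior_subset
  -- convexity of f
  have hconv : ConvexOn ℝ (Set.Icc a b) f := by
    apply convexOn_of_hasDerivWithinAt2_nonneg (convex_Icc a b)
      (f' := f') (f'' := f'')
    · exact fun x hx => (hf' x hx).continuousWithinAt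
    · exact fun x hx => ((hf' x (hint hx)).mono hint)
    · exact fun x hx => ((hf'' x (hint hx)).mono hint)
    · exact fun x hx => (hM x (hint hx)).1
  -- convexity of g = M x^2/2 - f
  have hconvg : ConvexOn ℝ (Set.Icc a b) (fun x => M * x ^ 2 / 2 - f x) := by
    apply convexOn_of_hasDerivWithinAt2_nonneg (convex_Icc a b)
      (f' := fun x => M * x - f' x) (f'' := fun x => M - f'' x)
    · exact fun x hx => (((continuous_const.mul (continuous_pow 2)).div_const 2).continuousWithinAt).sub
        ((hf' x hx).continuousWithinAt)
    · intro x hx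
      have h1 : HasDerivWithinAt (fun x : ℝ => M * x ^ 2 / 2) (M * x) (interior (Set.Icc a b)) x := by
        have := ((hasDerivAt_pow 2 x).const_mul M).div_const 2
        simp only [Nat.cast_ofNat, pow_one] at this
        refine this.hasDerivWithinAt.congr_deriv ?_
        norm_num
        ring
      exact h1.sub ((hf' x (hint hx)).mono hint)
    · intro x hx
      have h1 : HasDerivWithinAt (fun x : ℝ => M * x) M (interior (Set.Icc a b)) x := by
        simpa using ((hasDerivAt_id x).const_mul M).hasDerivWithinAt
      exact h1.sub ((hf'' x (hint hx)).mono hint)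
    · exact fun x hx => sub_nonneg.2 (hM x (hint hx)).2
  have hl0' : (0:ℝ) ≤ 1 - lam := by linarith
  have hsum : (1 - lam) + lam = 1 := by ring
  have key1 := hconv.2 ha hb hl0' hl0 hsum
  have key2 := hconvg.2 ha hb hl0' hl0 hsum
  simp only [smul_eq_mul] at key1 key2
  constructor
  · linarith
  · have hexp : (1 - lam) * (M * a ^ 2 / 2) + lam * (M * b ^ 2 / 2)
        - M * ((1 - lam) * a + lam * b) ^ 2 / 2 = lam * (1 - lam) * M * (b - a) ^ 2 / 2 := by
      ring
    nlinarith [sq_nonneg (b - a), mul_nonneg (mul_nonneg hl0 (by linarith : (0:ℝ) ≤ 1 - lam)) hM0]
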